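/- Let A be a II₁ factor (or Mₙ(ℂ) with n ≥ 2) with normalized (center-valued, hence scalar) trace τ. Suppose a unital surjective linear map T : A → A admits two representations Tx = γ·Sx + (1−γ)·τ(x)·1 = γ'·S'x + (1−γ')·τ(x)·1 for all x ∈ A, where γ, γ' ∈ ℂ \ {0} and S, S' are spectrum-preserving Jordan automorphisms, and suppose A contains a projection p with τ(p) = 1/3. Then γ = γ' and S = S'. -/

import Mathlib

/-- An idempotent is invertible paired with any scalar `z ∉ {0, 1}`:
`z•1 - p` has explicit inverse `z⁻¹•1 + (z(z-1))⁻¹•p`. -/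
lemma aux_isUnit_sub_idem {A : Type*} [Ring A] [Algebra ℂ A]
    {p : A} (hp : IsIdempotentElem p) {z : ℂ} (hz0 : z ≠ 0) (hz1 : z ≠ 1) :
    IsUnit (algebraMap ℂ A z - p) := by
  have hz1' : z - 1 ≠ 0 := sub_ne_zero.mpr hz1
  set b : ℂ := (z * (z - 1))⁻¹ with hb
  have key : ∀ a c : ℂ, (algebraMap ℂ A z - p) * (a • 1 + c • p)
      = (z * a) • 1 + (z * c - a - c) • p := by
    intro a c
    rw [Algebra.algebraMap_eq_smul_one]
    have : p * p = p := hp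
    simp only [sub_mul, mul_add, smul_mul_assoc, mul_smul_comm, smul_smul, one_mul,
      mul_one, this]
    module
  have key' : ∀ a c : ℂ, (a • 1 + c • p) * (algebraMap ℂ A z - p)
      = (z * a) • 1 + (z * c - a - c) • p := by
    intro a c
    rw [Algebra.algebraMap_eq_smul_one]
    have : p * p = p := hp
    simp only [mul_sub, add_mul, smul_mul_assoc, mul_smul_comm, smul_smul, one_mul,
      mul_one, this]
    module
  have h1 : z * z⁻¹ = 1 := mul_inv_cancel₀ hz0
  have h2 : z * b - z⁻¹ - b = 0 := by
    field_simp [hb]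
    rw [hb]
    linear_combination (mul_inv_cancel₀ (mul_ne_zero hz0 hz1'))
  exact ⟨⟨algebraMap ℂ A z - p, z⁻¹ • 1 + b • p,
    by rw [key z⁻¹ b, h1, h2, zero_smul, add_zero, one_smul],
    by rw [key' z⁻¹ b, h1, h2, zero_smul, add_zero, one_smul]⟩, rfl⟩

lemma aux_spectrum_idem {A : Type*} [NormedRing A] [NormedAlgebra ℂ A]
    [CompleteSpace A] [NormOneClass A]
    {p : A} (hp : IsIdempotentElem p) (hp0 : p ≠ 0) (hp1 : p ≠ 1) :
    spectrum ℂ p = {0, 1} := by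
  ext z
  constructor
  · intro hz
    by_contra h
    simp only [Set.mem_insert_iff, Set.mem_singleton_iff, not_or] at h
    exact (spectrum.mem_iff.mp hz) (aux_isUnit_sub_idem hp h.1 h.2)
  · rintro (rfl | rfl)
    · rw [spectrum.mem_iff, map_zero, zero_sub]
      intro h
      have h' : IsUnit p := by simpa using h.neg
      obtain ⟨u, hu⟩ := h'
      have : p * (1 - p) = 0 := by
        rw [mul_sub, mul_one, hp.eq, sub_self]
      have h1p : (1 : A) - p = 0 := by
        calc (1 : A) - p = (↑u⁻¹ * p) * (1 - p) := by rw [← hu, u.inv_mul, one_mul]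
        _ = ↑u⁻¹ * (p * (1 - p)) := by rw [mul_assoc]
        _ = 0 := by rw [this, mul_zero]
      exact hp1 (by linear_combination (norm := noncomm_ring) -h1p)
    · rw [spectrum.mem_iff, map_one]
      intro h
      obtain ⟨u, hu⟩ := h
      have : (1 - p) * p = 0 := by
        rw [sub_mul, one_mul, hp.eq, sub_self]
      have h1p : p = 0 := by
        calc p = (↑u⁻¹ * (1 - p)) * p := by rw [← hu, u.inv_mul, one_mul]
        _ = ↑u⁻¹ * ((1 - p) * p) := by rw [mul_assoc]
        _ = 0 := by rw [this, mul_zero]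
      exact hp0 h1p

/-- Uniqueness of the canonical representation `Tx = γ Sx + (1-γ) τ(x) 1` of a unital
surjective linear map on an algebra with a normalised trace possessing a projection of
trace `1/3` (e.g. a II₁ factor or `Mₙ(ℂ)`, `n ≥ 2`). -/
theorem canonical_representation_unique
    {A : Type*}
    [NormedRing A] [StarRing A] [CStarRing A] [NormedAlgebra ℂ A] [CompleteSpace A]
    [StarModule ℂ A] [NormOneClass A]
    (τ : A →ₗ[ℂ] ℂ) (hτ1 : τ 1 = 1) (hτtr : ∀ x y : A, τ (x * y) = τ (y * x))
    (p : A) (hpsa : IsSelfAdjoint p) (hpidem : IsIdempotentElem p) (hτp : τ p = 1 / 3)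
    (T S S' : A →ₗ[ℂ] A)
    (hone : T 1 = 1) (hsurj : Function.Surjective T)
    (hSbij : Function.Bijective S) (hS'bij : Function.Bijective S')
    (hSJ : ∀ x y : A, S (x * y + y * x) = S x * S y + S y * S x)
    (hS'J : ∀ x y : A, S' (x * y + y * x) = S' x * S' y + S' y * S' x)
    (hSspec : ∀ x : A, spectrum ℂ (S x) = spectrum ℂ x)
    (hS'spec : ∀ x : A, spectrum ℂ (S' x) = spectrum ℂ x)
    (γ γ' : ℂ) (hγ : γ ≠ 0) (hγ' : γ' ≠ 0)
    (hrep : ∀ x : A, T x = γ • S x + ((1 - γ) * τ x) • (1 : A))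
    (hrep' : ∀ x : A, T x = γ' • S' x + ((1 - γ') * τ x) • (1 : A)) :
    γ = γ' ∧ S = S' := by
  -- p is a nontrivial projection since τ p = 1/3
  have hp0 : p ≠ 0 := fun h => by rw [h, map_zero] at hτp; norm_num at hτp
  have hp1 : p ≠ 1 := fun h => by rw [h, hτ1] at hτp; norm_num at hτp
  have hσp : spectrum ℂ p = {0, 1} := aux_spectrum_idem hpidem hp0 hp1
  -- the traceless element x = p - (1/3)•1
  set x : A := p - algebraMap ℂ A (1/3) with hx
  have hτx : τ x = 0 := by
    rw [hx, map_sub, hτp, Algebra.algebraMap_eq_smul_one, map_smul, hτ1]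
    simp
  have hkey : ∀ z : ℂ, algebraMap ℂ A z - x = algebraMap ℂ A (z + 1/3) - p := by
    intro z
    rw [hx, map_add]
    abel
  have hσx : spectrum ℂ x = {-(1/3), 2/3} := by
    ext z
    rw [spectrum.mem_iff, hkey z, ← spectrum.mem_iff, hσp]
    simp only [Set.mem_insert_iff, Set.mem_singleton_iff]
    constructor
    · rintro (h | h)
      · left; linear_combination h
      · right; linear_combination h
    · rintro (h | h)
      · left; linear_combination h
      · right; linear_combination h
  -- both representations agree at x, hence γ • S x = γ' • S' x
  have heq : γ • S x = γ' • S' x := by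
    have h := (hrep x).symm.trans (hrep' x)
    rw [hτx] at h
    simpa using h
  -- deduce spectral identity for c := γ'⁻¹ * γ
  set c : ℂ := γ'⁻¹ * γ with hc
  have hc0 : c ≠ 0 := mul_ne_zero (inv_ne_zero hγ') hγ
  have hS'x : S' x = c • S x := by
    calc S' x = γ'⁻¹ • (γ' • S' x) := by rw [smul_smul, inv_mul_cancel₀ hγ', one_smul]
    _ = γ'⁻¹ • (γ • S x) := by rw [heq]
    _ = c • S x := by rw [smul_smul]
  -- spectral memberships
  have hmem : ∀ w : ℂ, w ∈ spectrum ℂ x → ∃ y ∈ spectrum ℂ x, c * y = w := by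
    intro w hw
    rw [← hS'spec x, hS'x,
      show c • S x = (Units.mk0 c hc0 : ℂˣ) • S x from rfl,
      spectrum.unit_smul_eq_smul, hSspec x] at hw
    obtain ⟨y, hy, hyw⟩ := hw
    exact ⟨y, hy, by simpa [Units.smul_def] using hyw⟩
  have hc1 : c = 1 := by
    obtain ⟨y1, hy1, he1⟩ := hmem (2/3) (by rw [hσx]; right; rfl)
    obtain ⟨y2, hy2, he2⟩ := hmem (-(1/3)) (by rw [hσx]; left; rfl)
    rw [hσx] at hy1 hy2
    simp only [Set.mem_insert_iff, Set.mem_singleton_iff] at hy1 hy2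
    rcases hy1 with rfl | rfl
    · -- c * (-(1/3)) = 2/3, so c = -2
      have hcval : c = -2 := by linear_combination -3 * he1
      rcases hy2 with rfl | rfl
      · rw [hcval] at he2; norm_num at he2
      · rw [hcval] at he2; norm_num at he2
    · -- c * (2/3) = 2/3, so c = 1
      linear_combination (3/2) * he1
  have hγγ' : γ = γ' := by
    have h := hc1
    rw [hc] at h
    field_simp at h
    exact h
  refine ⟨hγγ', ?_⟩
  ext y
  have := (hrep y).symm.trans (hrep' y)
  rw [← hγγ'] at this
  have h2 : γ • S y = γ • S' y := by
    have := add_right_cancel this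
    exact this
  exact smul_right_injective A hγ h2
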